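/- arXiv:1505.06098 — 3 statements merged into one kernel-verified Lean document; each statement's English description precedes it below -/
import Mathlib

section
/- Let P be a lattice path starting and ending with a corner (East step followed by North step). For each path P' weakly below P with cc(P') = k ≥ 1 and each common corner c of P' and P, define a path by shifting the subpath of P' Northeast of c one step South (or taking P' itself if c is the Northeast-most corner of P). This assignment is a bijection between the set of pairs (P', common corner of P' and P) and the set of all lattice paths weakly below P. -/
/-! Lattice paths with unit East and North steps, encoded as `List Bool`
where `false` is an East step and `true` is a North step, read from the
starting (Southwest) point. -/

/-- `heightsAux p k` lists, for each East step of `p`, the number of North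
steps preceding it, starting from initial height `k`. -/
def heightsAux : List Bool → ℕ → List ℕ
  | [], _ => []
  | false :: rest, k => k :: heightsAux rest k
  | true :: rest, k => heightsAux rest (k + 1)

/-- The list of heights at which the successive East steps of `p` occur. -/
def heights (p : List Bool) : List ℕ := heightsAux p 0

/-- Number of East steps. -/
def countE (p : List Bool) : ℕ := p.count false

/-- Number of North steps. -/
def countN (p : List Bool) : ℕ := p.count true

/-- `p` is weakly below `q`: same endpoints, and each East step of `p` occurs
at a height not exceeding that of the corresponding East step of `q`. -/
def WeaklyBelow (p q : List Bool) : Prop :=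
  countE p = countE q ∧ countN p = countN q ∧
    List.Forall₂ (· ≤ ·) (heights p) (heights q)

/-- The path `p` has a corner (an East step immediately followed by a North
step) at its `i`-th East step (0-based). -/
def PathCorner (p : List Bool) (i : ℕ) : Prop :=
  (i + 1 = (heights p).length ∧ (heights p).getD i 0 < countN p) ∨
  (i + 1 < (heights p).length ∧ (heights p).getD i 0 < (heights p).getD (i + 1) 0)

/-- `p` and `q` have a common corner at their `i`-th East step: both have a
corner there and these corners are at the same location in the plane. -/
def CommonCorner (q p : List Bool) (i : ℕ) : Prop :=
  PathCorner p i ∧ PathCorner q i ∧ (heights p).getD i 0 = (heights q).getD i 0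

/-- `cc q p` is the number of corners that `p` and `q` have in common. -/
noncomputable def cc (p q : List Bool) : ℕ :=
  Set.ncard {i : ℕ | CommonCorner q p i}

/-- Remove the first North step of a path. -/
def removeFirstN : List Bool → List Bool
  | [] => []
  | true :: rest => rest
  | false :: rest => false :: removeFirstN rest

/-- Remove the first North step occurring after the `i`-th East step (0-based). -/
def removeNAfterE : List Bool → ℕ → List Bool
  | [], _ => []
  | false :: rest, 0 => false :: removeFirstN rest
  | false :: rest, Nat.succ i => false :: removeNAfterE rest i
  | true :: rest, i => true :: removeNAfterE rest i

/-- Shift the subpath of `p` Northeast of the corner at the `i`-th East step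
one step South (keeping endpoints, so a North step is appended at the end);
if the corner is the Northeast-most corner of `P` (the corner at the last East
step of `P`, since `P` ends with a corner), take `p` itself. -/
def shiftAtCorner (P p : List Bool) (i : ℕ) : List Bool :=
  if i = countE P - 1 then p else removeNAfterE p i ++ [true]

namespace ShiftBij

@[simp] lemma countE_nil : countE [] = 0 := rfl
@[simp] lemma countN_nil : countN [] = 0 := rfl
@[simp] lemma countE_cons_false (r : List Bool) : countE (false :: r) = countE r + 1 := by
  simp [countE]
@[simp] lemma countE_cons_true (r : List Bool) : countE (true :: r) = countE r := by
  simp [countE]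
@[simp] lemma countN_cons_false (r : List Bool) : countN (false :: r) = countN r := by
  simp [countN]
@[simp] lemma countN_cons_true (r : List Bool) : countN (true :: r) = countN r + 1 := by
  simp [countN]

lemma getD_mem {l : List ℕ} {i : ℕ} (h : i < l.length) : l.getD i 0 ∈ l := by
  rw [List.getD_eq_getElem l 0 h]; exact List.getElem_mem h

lemma length_heightsAux (p : List Bool) (k : ℕ) : (heightsAux p k).length = countE p := by
  induction p generalizing k with
  | nil => rfl
  | cons a rest ih => cases a <;> simp [heightsAux, ih]

lemma heightsAux_cons_false (r : List Bool) (k : ℕ) :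
    heightsAux (false :: r) k = k :: heightsAux r k := rfl
lemma heightsAux_cons_true (r : List Bool) (k : ℕ) :
    heightsAux (true :: r) k = heightsAux r (k + 1) := rfl

lemma le_of_mem_heightsAux {p : List Bool} {k x : ℕ} (hx : x ∈ heightsAux p k) : k ≤ x := by
  induction p generalizing k with
  | nil => simp [heightsAux] at hx
  | cons a rest ih =>
    cases a with
    | false =>
      rcases List.mem_cons.1 hx with h | h
      · omega
      · exact ih h
    | true => exact le_trans (by omega) (ih hx)

lemma mem_heightsAux_le {p : List Bool} {k x : ℕ} (hx : x ∈ heightsAux p k) :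
    x ≤ k + countN p := by
  induction p generalizing k with
  | nil => simp [heightsAux] at hx
  | cons a rest ih =>
    cases a with
    | false =>
      rcases List.mem_cons.1 hx with h | h
      · omega
      · have := ih h; simp; omega
    | true => have := ih (k := k + 1) hx; simp; omega

lemma sorted_heightsAux (p : List Bool) (k : ℕ) : (heightsAux p k).Pairwise (· ≤ ·) := by
  induction p generalizing k with
  | nil => simp [heightsAux]
  | cons a rest ih =>
    cases a with
    | false =>
      simp only [heightsAux, List.pairwise_cons]
      exact ⟨fun b hb => le_of_mem_heightsAux hb, ih k⟩
    | true => exact ih (k + 1)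

lemma heightsAux_succ (p : List Bool) (k : ℕ) :
    heightsAux p (k + 1) = (heightsAux p k).map (· + 1) := by
  induction p generalizing k with
  | nil => rfl
  | cons a rest ih =>
    cases a with
    | false => simp [heightsAux, ih]
    | true => simpa [heightsAux] using ih (k + 1)

lemma length_bool (p : List Bool) : p.length = countE p + countN p := by
  induction p with
  | nil => rfl
  | cons a rest ih => cases a <;> simp [ih] <;> omega

lemma countE_removeFirstN (p : List Bool) : countE (removeFirstN p) = countE p := by
  induction p with
  | nil => rfl
  | cons a rest ih => cases a <;> simp [removeFirstN, ih]

lemma countN_removeFirstN {p : List Bool} (h : true ∈ p) :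
    countN (removeFirstN p) + 1 = countN p := by
  induction p with
  | nil => simp at h
  | cons a rest ih =>
    cases a with
    | false =>
      have h' : true ∈ rest := by simpa using h
      have := ih h'
      simp [removeFirstN]; omega
    | true => simp [removeFirstN]

lemma heightsAux_removeFirstN {p : List Bool} (h : true ∈ p) (k : ℕ) :
    heightsAux (removeFirstN p) k
      = (heightsAux p k).map (fun x => if k < x then x - 1 else x) := by
  induction p generalizing k with
  | nil => simp at h
  | cons a rest ih =>
    cases a with
    | false =>
      have h' : true ∈ rest := by simpa using h
      simp only [removeFirstN, heightsAux, ih h', List.map_cons]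
      simp
    | true =>
      simp only [removeFirstN, heightsAux, heightsAux_succ, List.map_map]
      rw [List.map_congr_left, List.map_id]
      intro x hx
      have hk : k ≤ x := le_of_mem_heightsAux hx
      simp [Function.comp]
      omega

lemma countE_removeNAfterE (p : List Bool) (i : ℕ) :
    countE (removeNAfterE p i) = countE p := by
  induction p generalizing i with
  | nil => rfl
  | cons a rest ih =>
    cases a with
    | false =>
      cases i with
      | zero => simp [removeNAfterE, countE_removeFirstN]
      | succ j => simp [removeNAfterE, ih j]
    | true => simp [removeNAfterE, ih i]

lemma countN_removeNAfterE {p : List Bool} {i k : ℕ}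
    (h1 : (heightsAux p k).getD i 0 < k + countN p) (h2 : i < countE p) :
    countN (removeNAfterE p i) + 1 = countN p := by
  induction p generalizing i k with
  | nil => simp at h2
  | cons a rest ih =>
    cases a with
    | false =>
      cases i with
      | zero =>
        have hpos : 0 < countN rest := by
          simp only [heightsAux_cons_false, List.getD_cons_zero, countN_cons_false] at h1
          omega
        have htr : true ∈ rest := by
          rw [← List.count_pos_iff]; exact hpos
        have := countN_removeFirstN htr
        simp [removeNAfterE]; omega
      | succ j =>
        have h1' : (heightsAux rest k).getD j 0 < k + countN rest := by
          simpa only [heightsAux_cons_false, List.getD_cons_succ, countN_cons_false] using h1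
        have h2' : j < countE rest := by simp at h2; omega
        have := ih h1' h2'
        simp [removeNAfterE]; omega
    | true =>
      have h1' : (heightsAux rest (k + 1)).getD i 0 < (k + 1) + countN rest := by
        simp only [heightsAux_cons_true, countN_cons_true] at h1
        omega
      have h2' : i < countE rest := by simpa using h2
      have := ih h1' h2'
      simp [removeNAfterE]; omega

lemma heightsAux_removeNAfterE {p : List Bool} {i k : ℕ}
    (h1 : (heightsAux p k).getD i 0 < k + countN p) (h2 : i < countE p) :
    heightsAux (removeNAfterE p i) k
      = (heightsAux p k).map
          (fun x => if (heightsAux p k).getD i 0 < x then x - 1 else x) := by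
  induction p generalizing i k with
  | nil => simp at h2
  | cons a rest ih =>
    cases a with
    | false =>
      cases i with
      | zero =>
        have hpos : 0 < countN rest := by
          simp only [heightsAux_cons_false, List.getD_cons_zero, countN_cons_false] at h1
          omega
        have htr : true ∈ rest := by rw [← List.count_pos_iff]; exact hpos
        simp only [removeNAfterE, heightsAux, heightsAux_removeFirstN htr,
          List.getD_cons_zero, List.map_cons]
        simp
      | succ j =>
        have h1' : (heightsAux rest k).getD j 0 < k + countN rest := by
          simpa only [heightsAux_cons_false, List.getD_cons_succ, countN_cons_false] using h1
        have h2' : j < countE rest := by simp at h2; omega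
        have hge : k ≤ (heightsAux rest k).getD j 0 := by
          have hj : j < (heightsAux rest k).length := by
            rw [length_heightsAux]; exact h2'
          exact le_of_mem_heightsAux (getD_mem hj)
        simp only [removeNAfterE, heightsAux, ih h1' h2', List.getD_cons_succ,
          List.map_cons]
        congr 1
        rw [if_neg (by omega : ¬ (heightsAux rest k).getD j 0 < k)]
    | true =>
      have h1' : (heightsAux rest (k + 1)).getD i 0 < (k + 1) + countN rest := by
        simp only [heightsAux_cons_true, countN_cons_true] at h1
        omega
      have h2' : i < countE rest := by simpa using h2
      simpa [removeNAfterE, heightsAux] using ih h1' h2'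

def ofHeights (N : ℕ) : List ℕ → ℕ → List Bool
  | [], k => List.replicate (N - k) true
  | a :: rest, k => List.replicate (a - k) true ++ false :: ofHeights N rest a

lemma ofHeights_step {N : ℕ} {l : List ℕ} {k : ℕ} (hN : k < N) (hl : ∀ x ∈ l, k < x) :
    ofHeights N l k = true :: ofHeights N l (k + 1) := by
  cases l with
  | nil =>
    show List.replicate (N - k) true = true :: List.replicate (N - (k + 1)) true
    rw [show N - k = (N - (k + 1)) + 1 by omega, List.replicate_succ]
  | cons a rest =>
    have ha : k < a := hl a (by simp)
    show List.replicate (a - k) true ++ false :: ofHeights N rest a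
      = true :: (List.replicate (a - (k + 1)) true ++ false :: ofHeights N rest a)
    rw [show a - k = (a - (k + 1)) + 1 by omega, List.replicate_succ]
    simp

lemma heightsAux_replicate_append (m : ℕ) (r : List Bool) (k : ℕ) :
    heightsAux (List.replicate m true ++ r) k = heightsAux r (k + m) := by
  induction m generalizing k with
  | zero => simp [heightsAux]
  | succ m ih =>
    rw [List.replicate_succ]
    show heightsAux (List.replicate m true ++ r) (k + 1) = _
    rw [ih]; congr 1; omega

lemma heightsAux_ofHeights {N : ℕ} {l : List ℕ} {k : ℕ} (h : List.Chain (· ≤ ·) k l) :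
    heightsAux (ofHeights N l k) k = l := by
  induction l generalizing k with
  | nil =>
    show heightsAux (List.replicate (N - k) true) k = []
    have := heightsAux_replicate_append (N - k) [] k
    rw [List.append_nil] at this
    rw [this]; rfl
  | cons a rest ih =>
    rcases List.chain_cons.1 h with ⟨hka, hrest⟩
    show heightsAux (List.replicate (a - k) true ++ false :: ofHeights N rest a) k = a :: rest
    rw [heightsAux_replicate_append, show k + (a - k) = a by omega, heightsAux_cons_false,
      ih hrest]

lemma countE_ofHeights (N : ℕ) (l : List ℕ) (k : ℕ) : countE (ofHeights N l k) = l.length := by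
  induction l generalizing k with
  | nil =>
    show countE (List.replicate (N - k) true) = 0
    simp [countE, List.count_replicate]
  | cons a rest ih =>
    show countE (List.replicate (a - k) true ++ false :: ofHeights N rest a) = rest.length + 1
    have := ih a
    simp [countE, List.count_replicate] at this ⊢
    omega

lemma countN_ofHeights {N : ℕ} {l : List ℕ} {k : ℕ} (h : List.Chain (· ≤ ·) k l)
    (hle : ∀ x ∈ l, x ≤ N) (hkN : k ≤ N) :
    countN (ofHeights N l k) = N - k := by
  induction l generalizing k with
  | nil =>
    show countN (List.replicate (N - k) true) = N - k
    simp [countN]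
  | cons a rest ih =>
    rcases List.chain_cons.1 h with ⟨hka, hrest⟩
    have haN : a ≤ N := hle a (by simp)
    show countN (List.replicate (a - k) true ++ false :: ofHeights N rest a) = N - k
    have := ih hrest (fun x hx => hle x (by simp [hx]))  haN
    simp [countN] at this ⊢
    omega

lemma ofHeights_heightsAux (p : List Bool) (k : ℕ) :
    ofHeights (k + countN p) (heightsAux p k) k = p := by
  induction p generalizing k with
  | nil => show List.replicate (k - k) true = [] ; simp
  | cons a rest ih =>
    cases a with
    | false =>
      rw [heightsAux_cons_false, countN_cons_false]
      show List.replicate (k - k) true ++ false :: ofHeights (k + countN rest) (heightsAux rest k) k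
        = false :: rest
      simp [ih]
    | true =>
      rw [heightsAux_cons_true, countN_cons_true]
      rw [show k + (countN rest + 1) = (k + 1) + countN rest by omega]
      rw [ofHeights_step (by omega) (fun x hx => lt_of_lt_of_le (by omega) (le_of_mem_heightsAux hx))]
      rw [ih]

lemma heights_inj {p q : List Bool} (h : heights p = heights q) (hN : countN p = countN q) :
    p = q := by
  have hp := ofHeights_heightsAux p 0
  have hq := ofHeights_heightsAux q 0
  rw [← hp, ← hq]
  simp only [heights] at h
  rw [h, hN]

lemma forall₂_le_iff_getD {l₁ l₂ : List ℕ} :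
    List.Forall₂ (· ≤ ·) l₁ l₂ ↔
      (l₁.length = l₂.length ∧ ∀ i < l₁.length, l₁.getD i 0 ≤ l₂.getD i 0) := by
  rw [List.forall₂_iff_get]
  constructor
  · rintro ⟨hlen, h⟩
    refine ⟨hlen, fun i hi => ?_⟩
    have := h i hi (hlen ▸ hi)
    rwa [List.getD_eq_getElem _ _ hi, List.getD_eq_getElem _ _ (hlen ▸ hi)]
  · rintro ⟨hlen, h⟩
    refine ⟨hlen, fun i hi hi' => ?_⟩
    have := h i hi
    rwa [List.getD_eq_getElem _ _ hi, List.getD_eq_getElem _ _ hi'] at this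
    
lemma sorted_getD_mono {l : List ℕ} (hs : l.Pairwise (· ≤ ·)) {i j : ℕ} (hij : i ≤ j)
    (hj : j < l.length) : l.getD i 0 ≤ l.getD j 0 := by
  rw [List.getD_eq_getElem _ _ (lt_of_le_of_lt hij hj), List.getD_eq_getElem _ _ hj]
  exact hs.rel_get_of_le (by simpa using hij)

lemma heightsAux_append_true (l : List Bool) (k : ℕ) :
    heightsAux (l ++ [true]) k = heightsAux l k := by
  induction l generalizing k with
  | nil => rfl
  | cons a rest ih =>
    cases a <;> simp [heightsAux_cons_false, heightsAux_cons_true, ih]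

lemma heightsAux_append_false (l : List Bool) (k : ℕ) :
    heightsAux (l ++ [false]) k = heightsAux l k ++ [k + countN l] := by
  induction l generalizing k with
  | nil => simp [heightsAux]
  | cons a rest ih =>
    cases a with
    | false => simp [heightsAux_cons_false, ih]
    | true =>
      simp only [List.cons_append, heightsAux_cons_true, ih, countN_cons_true]
      congr 2
      omega

lemma length_heights (p : List Bool) : (heights p).length = countE p := length_heightsAux p 0

lemma heights_sorted (p : List Bool) : (heights p).Pairwise (· ≤ ·) := sorted_heightsAux p 0

lemma heights_getD_le {p : List Bool} {i : ℕ} (h : i < (heights p).length) :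
    (heights p).getD i 0 ≤ countN p := by
  simpa [heights] using mem_heightsAux_le (getD_mem h)

lemma heights_removeNAfterE {p : List Bool} {i : ℕ}
    (h1 : (heights p).getD i 0 < countN p) (h2 : i < countE p) :
    heights (removeNAfterE p i)
      = (heights p).map (fun x => if (heights p).getD i 0 < x then x - 1 else x) :=
  heightsAux_removeNAfterE (k := 0) (by simpa [heights] using h1) h2

lemma countN_removeNAfterE' {p : List Bool} {i : ℕ}
    (h1 : (heights p).getD i 0 < countN p) (h2 : i < countE p) :
    countN (removeNAfterE p i) + 1 = countN p :=
  countN_removeNAfterE (k := 0) (by simpa [heights] using h1) h2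

lemma heights_append_true (l : List Bool) : heights (l ++ [true]) = heights l :=
  heightsAux_append_true l 0

@[simp] lemma countE_append_true (l : List Bool) : countE (l ++ [true]) = countE l := by
  simp [countE]

@[simp] lemma countN_append_true (l : List Bool) : countN (l ++ [true]) = countN l + 1 := by
  simp [countN]

lemma getD_map (f : ℕ → ℕ) {l : List ℕ} {j : ℕ} (h : j < l.length) :
    (l.map f).getD j 0 = f (l.getD j 0) := by
  rw [List.getD_eq_getElem _ _ h, List.getD_eq_getElem _ _ (by simpa using h),
    List.getElem_map]

lemma getD_map_range (f : ℕ → ℕ) {n j : ℕ} (h : j < n) :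
    (((List.range n).map f)).getD j 0 = f j := by
  rw [getD_map f (by simpa using h), List.getD_eq_getElem _ _ (by simpa using h),
    List.getElem_range]

lemma heights_ofHeights {N : ℕ} {l : List ℕ} (h : List.Chain (· ≤ ·) 0 l) :
    heights (ofHeights N l 0) = l := heightsAux_ofHeights h

end ShiftBij

/-- The assignment sending a pair `(P', c)`, with `P'` weakly below `P` and `c`
a common corner of `P'` and `P`, to the path obtained by shifting the subpath
of `P'` Northeast of `c` one step South (or `P'` itself when `c` is the
Northeast-most corner of `P`), is a bijection onto the set of all lattice
paths weakly below `P`. -/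
theorem shift_bijection (P : List Bool)
    (hstart : P.take 2 = [false, true]) (hend : P.reverse.take 2 = [true, false]) :
    Set.BijOn (fun x : List Bool × ℕ => shiftAtCorner P x.1 x.2)
      {x : List Bool × ℕ | WeaklyBelow x.1 P ∧ CommonCorner P x.1 x.2}
      {p : List Bool | WeaklyBelow p P} := by
  classical
  open ShiftBij in
  -- structural facts about P
  have hP1 : P = false :: true :: P.drop 2 := by
    have h := List.take_append_drop 2 P
    rw [hstart] at h
    exact h.symm
  obtain ⟨s, hP2⟩ : ∃ s, P = s ++ [false, true] := by
    have h := List.take_append_drop 2 P.reverse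
    rw [hend] at h
    refine ⟨(P.reverse.drop 2).reverse, ?_⟩
    calc P = P.reverse.reverse := (List.reverse_reverse P).symm
    _ = ([true, false] ++ P.reverse.drop 2).reverse := by rw [h]
    _ = (P.reverse.drop 2).reverse ++ [false, true] := by simp
  have hn1 : 1 ≤ countE P := by rw [hP1]; simp
  have hN1 : 1 ≤ countN P := by rw [hP1]; simp
  have hblen : (heights P).length = countE P := length_heights P
  have hb0 : (heights P).getD 0 0 = 0 := by
    conv_lhs => rw [hP1]
    rfl
  have hbs : heights P = heights s ++ [countN s] := by
    conv_lhs => rw [hP2]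
    rw [show s ++ [false, true] = (s ++ [false]) ++ [true] by simp]
    rw [heights_append_true]
    show heightsAux (s ++ [false]) 0 = heightsAux s 0 ++ [countN s]
    simpa using heightsAux_append_false s 0
  have hsN : countN P = countN s + 1 := by rw [hP2]; simp [countN]
  have hsE : countE P = countE s + 1 := by rw [hP2]; simp [countE]
  have hblast : (heights P).getD (countE P - 1) 0 = countN P - 1 := by
    rw [hbs]
    have hl : countE P - 1 = (heights s).length := by rw [length_heights]; omega
    rw [hl, List.getD_eq_getElem _ _
      (by simp only [List.length_append, List.length_cons, List.length_nil]; omega),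
      List.getElem_concat_length rfl]
    omega
  have hbN : ∀ i < countE P, (heights P).getD i 0 ≤ countN P := by
    intro i hi
    exact heights_getD_le (by rw [hblen]; exact hi)
  have hbmono : ∀ i j, i ≤ j → j < countE P →
      (heights P).getD i 0 ≤ (heights P).getD j 0 := by
    intro i j hij hj
    exact sorted_getD_mono (heights_sorted P) hij (by rw [hblen]; exact hj)
  have hPlast : PathCorner P (countE P - 1) := by
    left
    constructor
    · rw [hblen]; omega
    · rw [hblast]; omega
  -- the key analysis of the forward map
  have key : ∀ p i, WeaklyBelow p P → CommonCorner P p i →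
      WeaklyBelow (shiftAtCorner P p i) P ∧ i < countE P ∧
      (heights (shiftAtCorner P p i)).getD i 0 = (heights P).getD i 0 ∧
      (∀ j, i < j → j < countE P →
        (heights (shiftAtCorner P p i)).getD j 0 < (heights P).getD j 0) ∧
      (∀ j, j < countE P → (heights p).getD j 0 =
        if j ≤ i then (heights (shiftAtCorner P p i)).getD j 0
        else (heights (shiftAtCorner P p i)).getD j 0 + 1) := by
    intro p i hwb hcc
    obtain ⟨hE, hN', hF⟩ := hwb
    obtain ⟨hlen2, hle⟩ := forall₂_le_iff_getD.1 hF
    obtain ⟨hcp, hcP, heq⟩ := hcc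
    have halen : (heights p).length = countE P := by rw [length_heights]; exact hE
    have hin : i < countE P := by
      rcases hcP with ⟨h, _⟩ | ⟨h, _⟩ <;> rw [hblen] at h <;> omega
    by_cases hi : i = countE P - 1
    · have hs : shiftAtCorner P p i = p := by rw [shiftAtCorner, if_pos hi]
      rw [hs]
      refine ⟨⟨hE, hN', hF⟩, hin, heq, ?_, ?_⟩
      · intro j hj1 hj2; omega
      · intro j hj; rw [if_pos (by omega)]
    · -- i is not the last East step of P
      have hamono : ∀ j k, j ≤ k → k < countE P →
          (heights p).getD j 0 ≤ (heights p).getD k 0 := by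
        intro j k hjk hk
        exact sorted_getD_mono (heights_sorted p) hjk (by rw [halen]; exact hk)
      rcases hcp with ⟨h1, h2⟩ | ⟨h1, h2⟩
      · rw [halen] at h1; omega
      rw [halen] at h1
      have hm : (heights p).getD i 0 < countN p := by
        have := heights_getD_le (p := p) (i := i + 1) (by rw [halen]; exact h1)
        omega
      have hs : shiftAtCorner P p i = removeNAfterE p i ++ [true] := by
        rw [shiftAtCorner, if_neg hi]
      have hhs : heights (shiftAtCorner P p i)
          = (heights p).map (fun x => if (heights p).getD i 0 < x then x - 1 else x) := by
        rw [hs, heights_append_true, heights_removeNAfterE hm (by omega)]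
      have hstep : ∀ j, j < countE P → (heights (shiftAtCorner P p i)).getD j 0
          = if (heights p).getD i 0 < (heights p).getD j 0
            then (heights p).getD j 0 - 1 else (heights p).getD j 0 := by
        intro j hj
        rw [hhs, getD_map _ (by rw [halen]; exact hj)]
      have hcE : countE (shiftAtCorner P p i) = countE P := by
        rw [hs, countE_append_true, countE_removeNAfterE, hE]
      have hcN : countN (shiftAtCorner P p i) = countN P := by
        rw [hs, countN_append_true, countN_removeNAfterE' hm (by omega), hN']
      have hslen : (heights (shiftAtCorner P p i)).length = countE P := by
        rw [length_heights, hcE]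
      refine ⟨⟨hcE, hcN, ?_⟩, hin, ?_, ?_, ?_⟩
      · rw [forall₂_le_iff_getD]
        refine ⟨by rw [hslen, hblen], ?_⟩
        intro j hj
        rw [hslen] at hj
        rw [hstep j hj]
        have hj' := hle j (by omega)
        by_cases hji : j ≤ i
        · have := hamono j i hji hin
          rw [if_neg (by omega)]
          exact hj'
        · have := hamono (i + 1) j (by omega) hj
          split <;> omega
      · rw [hstep i hin, if_neg (by omega)]
        exact heq
      · intro j hj1 hj2
        have h3 := hamono (i + 1) j (by omega) hj2
        have h4 := hle j (by omega)
        rw [hstep j hj2, if_pos (by omega)]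
        omega
      · intro j hj
        rw [hstep j hj]
        by_cases hji : j ≤ i
        · have := hamono j i hji hin
          rw [if_pos hji, if_neg (by omega)]
        · have := hamono (i + 1) j (by omega) hj
          rw [if_neg hji, if_pos (by omega)]
          omega
  constructor
  · -- MapsTo
    intro x hx
    obtain ⟨hw, hc⟩ := hx
    exact (key x.1 x.2 hw hc).1
  constructor
  · -- InjOn
    intro x hx y hy hxy
    obtain ⟨hwx, hcx⟩ := hx
    obtain ⟨hwy, hcy⟩ := hy
    obtain ⟨kx1, kx2, kx3, kx4, kx5⟩ := key x.1 x.2 hwx hcx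
    obtain ⟨ky1, ky2, ky3, ky4, ky5⟩ := key y.1 y.2 hwy hcy
    have hxy' : shiftAtCorner P x.1 x.2 = shiftAtCorner P y.1 y.2 := hxy
    have hii : x.2 = y.2 := by
      by_contra hne
      rcases Nat.lt_or_ge x.2 y.2 with h | h
      · have h5 := kx4 y.2 h ky2
        rw [hxy', ky3] at h5
        omega
      · have h5 := ky4 x.2 (by omega) kx2
        rw [← hxy', kx3] at h5
        omega
    have hpp : x.1 = y.1 := by
      apply heights_inj
      · apply List.ext_getElem
        · rw [length_heights, length_heights, hwx.1, hwy.1]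
        intro j h1 h2
        rw [← List.getD_eq_getElem _ 0 h1, ← List.getD_eq_getElem _ 0 h2]
        have hj : j < countE P := by rw [length_heights, hwx.1] at h1; exact h1
        have e1 := kx5 j hj
        have e2 := ky5 j hj
        rw [hxy', hii] at e1
        rw [e1, e2]
      · rw [hwx.2.1, hwy.2.1]
    exact Prod.ext hpp hii
  · -- SurjOn
    intro p' hp'
    have hwb' : WeaklyBelow p' P := hp'
    obtain ⟨hE', hN', hF'⟩ := hwb'
    obtain ⟨hlen2, hle'⟩ := forall₂_le_iff_getD.1 hF'
    have ha'len : (heights p').length = countE P := by rw [length_heights]; exact hE'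
    have ha'mono : ∀ j k, j ≤ k → k < countE P →
        (heights p').getD j 0 ≤ (heights p').getD k 0 := by
      intro j k hjk hk
      exact sorted_getD_mono (heights_sorted p') hjk (by rw [ha'len]; exact hk)
    have ha'N : ∀ j < countE P, (heights p').getD j 0 ≤ countN P := by
      intro j hj
      have := heights_getD_le (p := p') (i := j) (by rw [ha'len]; exact hj)
      omega
    have hQ0 : (heights p').getD 0 0 = (heights P).getD 0 0 := by
      have := hle' 0 (by rw [ha'len]; omega)
      omega
    set i := Nat.findGreatest
      (fun j => (heights p').getD j 0 = (heights P).getD j 0) (countE P - 1) with hidef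
    have hispec : (heights p').getD i 0 = (heights P).getD i 0 :=
      Nat.findGreatest_spec
        (P := fun j => (heights p').getD j 0 = (heights P).getD j 0) (Nat.zero_le _) hQ0
    have hile : i ≤ countE P - 1 := Nat.findGreatest_le _
    have hgr : ∀ j, i < j → j < countE P →
        (heights p').getD j 0 < (heights P).getD j 0 := by
      intro j hj1 hj2
      have hne : ¬ ((heights p').getD j 0 = (heights P).getD j 0) :=
        Nat.findGreatest_is_greatest (n := countE P - 1) (k := j)
          (P := fun j => (heights p').getD j 0 = (heights P).getD j 0)
          hj1 (by omega)
      have := hle' j (by rw [ha'len]; exact hj2)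
      omega
    by_cases hi : i = countE P - 1
    · have hc1 : PathCorner p' i := by
        left
        constructor
        · rw [ha'len]; omega
        · rw [hispec, hi, hblast]
          omega
      have hc2 : PathCorner P i := by rw [hi]; exact hPlast
      refine ⟨(p', i), ⟨⟨hE', hN', hF'⟩, hc1, hc2, hispec⟩, ?_⟩
      show shiftAtCorner P p' i = p'
      rw [shiftAtCorner, if_pos hi]
    · -- i is an interior common... shift up beyond i
      have hi1 : i + 1 < countE P := by omega
      set g : ℕ → ℕ := fun j => if j ≤ i then (heights p').getD j 0
        else (heights p').getD j 0 + 1 with hgdef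
      have hgle : ∀ j, j ≤ i → g j = (heights p').getD j 0 := by
        intro j hj; rw [hgdef]; simp [hj]
      have hggt : ∀ j, i < j → g j = (heights p').getD j 0 + 1 := by
        intro j hj; rw [hgdef]; simp [Nat.not_le.2 hj]
      set a : List ℕ := (List.range (countE P)).map g with hadef
      have halen : a.length = countE P := by simp [hadef]
      have hag : ∀ j < countE P, a.getD j 0 = g j := by
        intro j hj
        exact getD_map_range g hj
      have hgmono : ∀ u v, u ≤ v → v < countE P → g u ≤ g v := by
        intro u v huv hv
        have := ha'mono u v huv hv
        by_cases hu : u ≤ i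
        · rw [hgle u hu]
          by_cases hvv : v ≤ i
          · rw [hgle v hvv]; exact this
          · rw [hggt v (by omega)]; omega
        · rw [hggt u (by omega), hggt v (by omega)]
          omega
      have hchain : List.Chain (· ≤ ·) 0 a := by
        rw [List.Chain, List.isChain_iff_pairwise, List.pairwise_cons]
        refine ⟨fun x _ => Nat.zero_le x, ?_⟩
        rw [List.pairwise_iff_getElem]
        intro u v hu hv huv
        rw [halen] at hu hv
        rw [← List.getD_eq_getElem _ 0 (by rw [halen]; exact hu),
          ← List.getD_eq_getElem _ 0 (by rw [halen]; exact hv), hag u hu, hag v hv]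
        exact hgmono u v (by omega) hv
      have haN : ∀ x ∈ a, x ≤ countN P := by
        intro x hx
        rw [hadef] at hx
        simp only [List.mem_map, List.mem_range] at hx
        obtain ⟨j, hj, rfl⟩ := hx
        have h3 := ha'N j hj
        by_cases hji : j ≤ i
        · rw [hgle j hji]; omega
        · rw [hggt j (by omega)]
          have := hgr j (by omega) hj
          have := hbN j hj
          omega
      set p := ofHeights (countN P) a 0 with hpdef
      have hpa : heights p = a := heights_ofHeights hchain
      have hpN : countN p = countN P := by
        rw [hpdef, countN_ofHeights hchain haN (Nat.zero_le _)]
        omega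
      have hpE : countE p = countE P := by
        rw [hpdef, countE_ofHeights, ← halen, hadef]
      have hpg : ∀ j < countE P, (heights p).getD j 0 = g j := by
        intro j hj
        rw [hpa]; exact hag j hj
      have hwbp : WeaklyBelow p P := by
        refine ⟨hpE, hpN, ?_⟩
        rw [forall₂_le_iff_getD]
        refine ⟨by rw [length_heights, hpE, hblen], ?_⟩
        intro j hj
        rw [length_heights, hpE] at hj
        rw [hpg j hj]
        have h4 := hle' j (by rw [ha'len]; exact hj)
        by_cases hji : j ≤ i
        · rw [hgle j hji]; exact h4
        · rw [hggt j (by omega)]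
          have := hgr j (by omega) hj
          omega
      have hmono' := ha'mono i (i + 1) (by omega) hi1
      have hcorner : CommonCorner P p i := by
        refine ⟨?_, ?_, ?_⟩
        · right
          constructor
          · rw [length_heights, hpE]; exact hi1
          · rw [hpg i (by omega), hpg (i + 1) hi1, hgle i (le_refl i),
              hggt (i + 1) (by omega)]
            omega
        · right
          constructor
          · rw [hblen]; exact hi1
          · have := hgr (i + 1) (by omega) hi1
            omega
        · rw [hpg i (by omega), hgle i (le_refl i)]
          exact hispec
      have hmlt : (heights p).getD i 0 < countN p := by
        rw [hpg i (by omega), hgle i (le_refl i), hpN, hispec]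
        have := hgr (i + 1) (by omega) hi1
        have := hbN (i + 1) hi1
        omega
      have himg : shiftAtCorner P p i = p' := by
        rw [shiftAtCorner, if_neg hi]
        apply heights_inj
        · rw [heights_append_true, heights_removeNAfterE hmlt (by rw [hpE]; omega)]
          apply List.ext_getElem
          · rw [List.length_map, length_heights, hpE, ha'len]
          intro j h1 h2
          rw [List.length_map, length_heights, hpE] at h1
          rw [← List.getD_eq_getElem _ 0 (by simpa [List.length_map, length_heights, hpE] using h1),
            ← List.getD_eq_getElem _ 0 h2]
          rw [getD_map _ (by rw [length_heights, hpE]; exact h1)]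
          rw [hpg i (by omega), hpg j h1, hgle i (le_refl i)]
          by_cases hji : j ≤ i
          · have h5 := ha'mono j i hji (by omega)
            rw [hgle j hji, if_neg (by omega)]
          · have h5 := ha'mono i j (by omega) h1
            rw [hggt j (by omega), if_pos (by omega)]
            omega
        · rw [countN_append_true, countN_removeNAfterE' hmlt (by rw [hpE]; omega), hpN]
          omega
      exact ⟨(p, i), ⟨hwbp, hcorner⟩, himg⟩
end

section
/- In every non-ambiguous class of tree-like tableaux of size n, the total number of occupied corners over the class equals the cardinality of the class. -/
open Polynomial

/-- A tree-like tableau: a Young diagram together with a set of pointed cells,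
such that the top-left cell is pointed (the root point), every non-root point
has a point above it in its column or to its left in its row but not both,
and no row or column of the diagram is empty of points. Cells are indexed by
`(row, column)` with the top-left cell `(0,0)`. -/
structure TreeLikeTableau where
  shape : YoungDiagram
  points : Finset (ℕ × ℕ)
  points_subset : points ⊆ shape.cells
  root_mem : (0, 0) ∈ points
  point_cond : ∀ p ∈ points, p ≠ (0, 0) →
    Xor' (∃ r < p.1, (r, p.2) ∈ points) (∃ c < p.2, (p.1, c) ∈ points)
  no_empty_row : ∀ i j : ℕ, (i, j) ∈ shape.cells → ∃ c, (i, c) ∈ points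
  no_empty_col : ∀ i j : ℕ, (i, j) ∈ shape.cells → ∃ r, (r, j) ∈ points

namespace TreeLikeTableau

/-- The size of a tree-like tableau is its number of points. -/
def size (T : TreeLikeTableau) : ℕ := T.points.card

/-- The occupied corners of a tree-like tableau: pointed cells whose bottom
and right edges lie on the Southeast border of the diagram. -/
def occCorners (T : TreeLikeTableau) : Finset (ℕ × ℕ) :=
  T.points.filter (fun p => (p.1 + 1, p.2) ∉ T.shape.cells ∧ (p.1, p.2 + 1) ∉ T.shape.cells)

/-- The number of occupied corners. -/
def oc (T : TreeLikeTableau) : ℕ := T.occCorners.card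

end TreeLikeTableau

set_option linter.unusedSectionVars false

namespace TLTAux
-- auxiliary definitions for the proof
def mu (pts : Finset (ℕ × ℕ)) (j : ℕ) : ℕ :=
  (pts.filter (fun p => j ≤ p.2)).sup (fun p => p.1 + 1)
def nc (pts : Finset (ℕ × ℕ)) : ℕ := pts.sup (fun p => p.2 + 1)
def nr (pts : Finset (ℕ × ℕ)) : ℕ := mu pts 0

variable {pts : Finset (ℕ × ℕ)}
theorem mu_anti : Antitone (mu pts) := by
  intro a b hab
  apply Finset.sup_mono
  intro p hp
  simp only [Finset.mem_filter] at hp ⊢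
  exact ⟨hp.1, le_trans hab hp.2⟩

theorem lt_mu {a b j : ℕ} (h : (a, b) ∈ pts) (hj : j ≤ b) : a < mu pts j :=
  Finset.le_sup (f := fun p => p.1 + 1) (Finset.mem_filter.2 ⟨h, hj⟩)

theorem mu_le_nr (j : ℕ) : mu pts j ≤ nr pts := mu_anti (Nat.zero_le j)

theorem lt_nc {a b : ℕ} (h : (a, b) ∈ pts) : b < nc pts :=
  Finset.le_sup (f := fun p => p.2 + 1) h

theorem mu_eq_zero {j : ℕ} (hj : nc pts ≤ j) : mu pts j = 0 := by
  rw [mu, Finset.filter_false_of_mem, Finset.sup_empty]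
  · rfl
  · intro p hp
    have := lt_nc (a := p.1) (b := p.2) hp
    omega

theorem exists_mu {j : ℕ} (h : 0 < mu pts j) :
    ∃ p ∈ pts, j ≤ p.2 ∧ p.1 + 1 = mu pts j := by
  have hne : (pts.filter (fun p => j ≤ p.2)).Nonempty := by
    by_contra hc
    rw [Finset.not_nonempty_iff_eq_empty] at hc
    rw [mu, hc, Finset.sup_empty] at h
    exact absurd h (by simp)
  obtain ⟨p, hp, hps⟩ := Finset.exists_mem_eq_sup _ hne (fun p => p.1 + 1)
  refine ⟨p, (Finset.mem_filter.1 hp).1, (Finset.mem_filter.1 hp).2, hps.symm⟩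

theorem mu_col_point {j : ℕ} (h : mu pts (j + 1) < mu pts j) :
    (mu pts j - 1, j) ∈ pts := by
  obtain ⟨p, hp, hpj, hps⟩ := exists_mu (pts := pts) (j := j) (by omega)
  have hpj2 : p.2 = j := by
    by_contra hc
    have : j + 1 ≤ p.2 := by omega
    have := lt_mu (a := p.1) (b := p.2) hp this
    omega
  have hp1 : p.1 = mu pts j - 1 := by omega
  have : p = (mu pts j - 1, j) := Prod.ext hp1 hpj2
  rwa [← this]

theorem exists_col_last (hne : pts.Nonempty) : ∃ a, (a, nc pts - 1) ∈ pts := by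
  obtain ⟨p, hp, hps⟩ := Finset.exists_mem_eq_sup _ hne (fun p => p.2 + 1)
  have : p.2 = nc pts - 1 := by rw [nc, hps]; omega
  exact ⟨p.1, by rwa [← this]⟩

/-- helper: equal nats from equivalent strict upper bounds -/
theorem nat_eq_of_lt_iff {a b : ℕ} (h : ∀ i, i < a ↔ i < b) : a = b := by
  rcases lt_trichotomy a b with hc | hc | hc
  · exact absurd ((h a).2 hc) (lt_irrefl a)
  · exact hc
  · exact absurd ((h b).1 hc) (lt_irrefl b)

/-- Young diagram from an antitone column-length function. -/
def shapeFn (f : ℕ → ℕ) (r c : ℕ) (hf : Antitone f) : YoungDiagram where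
  cells := (Finset.range r ×ˢ Finset.range c).filter fun p => p.1 < f p.2
  isLowerSet := by
    rintro ⟨a, b⟩ ⟨a', b'⟩ ⟨(ha : a' ≤ a), (hb : b' ≤ b)⟩ h
    simp only [Finset.coe_filter, Set.mem_setOf_eq, Finset.mem_product,
      Finset.mem_range] at h ⊢
    exact ⟨⟨lt_of_le_of_lt ha h.1.1, lt_of_le_of_lt hb h.1.2⟩,
      lt_of_le_of_lt ha (lt_of_lt_of_le h.2 (hf hb))⟩

theorem mem_shapeFn {f : ℕ → ℕ} {r c : ℕ} {hf : Antitone f}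
    (hr : ∀ j, f j ≤ r) (hc : ∀ j, c ≤ j → f j = 0) {i j : ℕ} :
    (i, j) ∈ shapeFn f r c hf ↔ i < f j := by
  show (i, j) ∈ Finset.filter _ _ ↔ _
  simp only [Finset.mem_filter, Finset.mem_product, Finset.mem_range]
  constructor
  · exact fun h => h.2
  · intro h
    have hj : j < c := by
      by_contra hj
      rw [hc j (by omega)] at h; omega
    exact ⟨⟨lt_of_lt_of_le h (hr j), hj⟩, h⟩

theorem colLen_shapeFn {f : ℕ → ℕ} {r c : ℕ} {hf : Antitone f}
    (hr : ∀ j, f j ≤ r) (hc : ∀ j, c ≤ j → f j = 0) (j : ℕ) :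
    (shapeFn f r c hf).colLen j = f j := by
  apply nat_eq_of_lt_iff
  intro i
  rw [← YoungDiagram.mem_iff_lt_colLen, mem_shapeFn hr hc]

section T
variable {T : TreeLikeTableau} (hT : T.points = pts)
include hT

theorem colLen_ge_mu (j : ℕ) : mu pts j ≤ T.shape.colLen j := by
  rcases Nat.eq_zero_or_pos (mu pts j) with h | h
  · omega
  · obtain ⟨p, hp, hpj, hps⟩ := exists_mu (pts := pts) (j := j) h
    have hmem : (p.1, j) ∈ T.shape :=
      T.shape.up_left_mem (le_refl _) hpj
        ((T.shape.mem_cells _).1 (T.points_subset (hT ▸ (by rwa [show (p.1, p.2) = p from rfl]))))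
    rw [YoungDiagram.mem_iff_lt_colLen] at hmem
    omega

theorem colLen_le_nr (j : ℕ) : T.shape.colLen j ≤ nr pts := by
  by_contra hc
  have hmem : (nr pts, j) ∈ T.shape := YoungDiagram.mem_iff_lt_colLen.2 (by omega)
  obtain ⟨cc, hcc⟩ := T.no_empty_row _ _ hmem
  have : nr pts < mu pts 0 := lt_mu (hT ▸ hcc) (Nat.zero_le _)
  exact absurd this (by rw [nr] at *; omega)

theorem colLen_eq_zero {j : ℕ} (hj : nc pts ≤ j) : T.shape.colLen j = 0 := by
  by_contra hc
  have hmem : (0, j) ∈ T.shape := YoungDiagram.mem_iff_lt_colLen.2 (by omega)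
  obtain ⟨rr, hrr⟩ := T.no_empty_col _ _ hmem
  have := lt_nc (hT ▸ hrr)
  omega

theorem colLen_zero_eq : T.shape.colLen 0 = nr pts :=
  le_antisymm (colLen_le_nr hT 0) (colLen_ge_mu hT 0)

theorem row_covered {i : ℕ} (hi : i < nr pts) : ∃ cc, (i, cc) ∈ pts := by
  have hmem : (i, 0) ∈ T.shape := by
    rw [YoungDiagram.mem_iff_lt_colLen, colLen_zero_eq hT]; exact hi
  obtain ⟨cc, hcc⟩ := T.no_empty_row _ _ hmem
  exact ⟨cc, hT ▸ hcc⟩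

theorem col_covered {j : ℕ} (hj : j < nc pts) : ∃ rr, (rr, j) ∈ pts := by
  have hne : pts.Nonempty := ⟨(0, 0), hT ▸ T.root_mem⟩
  obtain ⟨a, ha⟩ := exists_col_last hne
  have ha' : (a, nc pts - 1) ∈ T.points := by rw [hT]; exact ha
  have hmem : (a, j) ∈ T.shape :=
    T.shape.up_left_mem (le_refl _) (by omega)
      ((T.shape.mem_cells _).1 (T.points_subset ha'))
  obtain ⟨rr, hrr⟩ := T.no_empty_col _ _ hmem
  exact ⟨rr, hT ▸ hrr⟩

end T

/-- Build a tableau from a column-length function. -/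
def mkT (T₀ : TreeLikeTableau) (h₀ : T₀.points = pts) (f : ℕ → ℕ) (hf : Antitone f)
    (hr : ∀ j, f j ≤ nr pts) (hc : ∀ j, nc pts ≤ j → f j = 0)
    (hmu : ∀ j, mu pts j ≤ f j) : TreeLikeTableau where
  shape := shapeFn f (nr pts) (nc pts) hf
  points := pts
  points_subset := by
    intro p hp
    rw [YoungDiagram.mem_cells, show p = (p.1, p.2) from rfl, mem_shapeFn hr hc]
    exact lt_of_lt_of_le (lt_mu hp (le_refl _)) (hmu p.2)
  root_mem := h₀ ▸ T₀.root_mem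
  point_cond := by
    intro p hp hne
    have := T₀.point_cond p (h₀ ▸ hp) hne
    simpa [h₀] using this
  no_empty_row := by
    intro i j hm
    rw [YoungDiagram.mem_cells, mem_shapeFn hr hc] at hm
    exact row_covered h₀ (lt_of_lt_of_le hm (hr j))
  no_empty_col := by
    intro i j hm
    rw [YoungDiagram.mem_cells, mem_shapeFn hr hc] at hm
    have hj : j < nc pts := by
      by_contra hj
      rw [hc j (by omega)] at hm; omega
    exact col_covered h₀ hj

theorem mkT_points (T₀ : TreeLikeTableau) (h₀ : T₀.points = pts) (f : ℕ → ℕ) (hf) (hr) (hc) (hmu) :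
    (mkT T₀ h₀ f hf hr hc hmu).points = pts := rfl

theorem mkT_colLen (T₀ : TreeLikeTableau) (h₀ : T₀.points = pts) (f : ℕ → ℕ) (hf) (hr) (hc) (hmu) (j : ℕ) :
    (mkT T₀ h₀ f hf hr hc hmu).shape.colLen j = f j := colLen_shapeFn (hf := hf) hr hc j

theorem tlt_ext {T T' : TreeLikeTableau} (hp : T.points = T'.points)
    (hc : ∀ j, T.shape.colLen j = T'.shape.colLen j) : T = T' := by
  have hs : T.shape = T'.shape := by
    ext ⟨i, j⟩
    simp only [YoungDiagram.mem_cells, YoungDiagram.mem_iff_lt_colLen, hc]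
  cases T; cases T'; simp_all

end TLTAux

namespace TLTAux
variable {pts : Finset (ℕ × ℕ)}

/-- Occupied corners in terms of column lengths. -/
theorem oc_eq {T : TreeLikeTableau} (hT : T.points = pts) :
    T.oc = ((Finset.range (nc pts)).filter (fun j =>
      T.shape.colLen j = mu pts j ∧ T.shape.colLen (j + 1) < mu pts j)).card := by
  classical
  apply Finset.card_bij (fun p _ => p.2)
  · intro p hp
    simp only [TreeLikeTableau.occCorners, Finset.mem_filter, YoungDiagram.mem_cells] at hp
    obtain ⟨hp1, hp2, hp3⟩ := hp
    have hpts : (p.1, p.2) ∈ pts := by rw [← hT]; exact hp1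
    have hin : p.1 < T.shape.colLen p.2 := by
      rw [← YoungDiagram.mem_iff_lt_colLen]
      exact (T.shape.mem_cells _).1 (T.points_subset hp1)
    rw [YoungDiagram.mem_iff_lt_colLen] at hp2 hp3
    have h1 : T.shape.colLen p.2 = p.1 + 1 := by omega
    have h2 : p.1 < mu pts p.2 := lt_mu hpts (le_refl _)
    have h3 : mu pts p.2 ≤ T.shape.colLen p.2 := colLen_ge_mu hT _
    simp only [Finset.mem_filter, Finset.mem_range]
    exact ⟨lt_nc hpts, by omega, by omega⟩
  · intro p hp q hq h
    simp only [TreeLikeTableau.occCorners, Finset.mem_filter, YoungDiagram.mem_cells,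
      YoungDiagram.mem_iff_lt_colLen] at hp hq
    have hinp : p.1 < T.shape.colLen p.2 := by
      rw [← YoungDiagram.mem_iff_lt_colLen]
      exact (T.shape.mem_cells _).1 (T.points_subset hp.1)
    have hinq : q.1 < T.shape.colLen q.2 := by
      rw [← YoungDiagram.mem_iff_lt_colLen]
      exact (T.shape.mem_cells _).1 (T.points_subset hq.1)
    have ha := hp.2.1
    have hb := hq.2.1
    have : p.1 = q.1 := by rw [h] at hinp ha; omega
    exact Prod.ext this h
  · intro j hj
    simp only [Finset.mem_filter, Finset.mem_range] at hj
    obtain ⟨hjc, hj1, hj2⟩ := hj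
    have hmu1 : 0 < mu pts j := by omega
    have hmm : mu pts (j + 1) < mu pts j :=
      lt_of_le_of_lt (le_trans (colLen_ge_mu hT _) (le_refl _)) hj2
    have hpt : (mu pts j - 1, j) ∈ pts := mu_col_point hmm
    refine ⟨(mu pts j - 1, j), ?_, rfl⟩
    simp only [TreeLikeTableau.occCorners, Finset.mem_filter, YoungDiagram.mem_cells,
      YoungDiagram.mem_iff_lt_colLen]
    refine ⟨by rw [hT]; exact hpt, by omega, by omega⟩

/-- the largest column where the diagram touches the closure -/
def fmax (pts : Finset (ℕ × ℕ)) (T : TreeLikeTableau) : ℕ :=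
  ((Finset.range (nc pts)).filter (fun j => T.shape.colLen j = mu pts j)).sup id

theorem fmax_spec {T : TreeLikeTableau} (hT : T.points = pts) (hnc : 0 < nc pts) :
    T.shape.colLen (fmax pts T) = mu pts (fmax pts T) ∧ fmax pts T < nc pts ∧
      ∀ j', fmax pts T < j' → j' < nc pts → mu pts j' < T.shape.colLen j' := by
  classical
  set F := (Finset.range (nc pts)).filter (fun j => T.shape.colLen j = mu pts j) with hF
  have h0 : (0 : ℕ) ∈ F := by
    simp only [hF, Finset.mem_filter, Finset.mem_range]
    exact ⟨hnc, colLen_zero_eq hT⟩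
  obtain ⟨b, hb, hsup⟩ := Finset.exists_mem_eq_sup F ⟨0, h0⟩ id
  have hfb : fmax pts T = b := hsup
  simp only [hF, Finset.mem_filter, Finset.mem_range] at hb
  refine ⟨by rw [hfb]; exact hb.2, by rw [hfb]; exact hb.1, ?_⟩
  intro j' h1 h2
  have hne : T.shape.colLen j' ≠ mu pts j' := by
    intro hc
    have : j' ∈ F := by
      simp only [hF, Finset.mem_filter, Finset.mem_range]; exact ⟨h2, hc⟩
    have := Finset.le_sup (f := id) this
    rw [← fmax] at this
    simp only [id] at this
    omega
  have := colLen_ge_mu hT j'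
  omega

theorem fmax_eq_iff {T : TreeLikeTableau} (hT : T.points = pts) (hnc : 0 < nc pts) {j : ℕ}
    (hj : j < nc pts) :
    fmax pts T = j ↔ (T.shape.colLen j = mu pts j ∧
      ∀ j', j < j' → j' < nc pts → mu pts j' < T.shape.colLen j') := by
  classical
  obtain ⟨hs1, hs2, hs3⟩ := fmax_spec hT hnc
  constructor
  · intro h; rw [h] at hs1 hs3; exact ⟨hs1, hs3⟩
  · rintro ⟨h1, h2⟩
    have hjF : j ≤ fmax pts T := by
      have : j ∈ (Finset.range (nc pts)).filter (fun j => T.shape.colLen j = mu pts j) := by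
        simp only [Finset.mem_filter, Finset.mem_range]; exact ⟨hj, h1⟩
      have := Finset.le_sup (f := id) this
      simpa [fmax] using this
    rcases Nat.lt_or_ge j (fmax pts T) with hlt | hge
    · have := h2 (fmax pts T) hlt hs2
      omega
    · omega

end TLTAux

namespace TLTAux
variable {pts : Finset (ℕ × ℕ)}

section Bij

/-- forward column-length modification: raise columns strictly right of `j` by one. -/
def gf (pts : Finset (ℕ × ℕ)) (j : ℕ) (T : TreeLikeTableau) : ℕ → ℕ := fun j' =>
  if j' ≤ j then T.shape.colLen j'
  else if j' < nc pts then T.shape.colLen j' + 1 else 0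

/-- backward column-length modification: lower columns strictly right of `j` by one. -/
def gb (_pts : Finset (ℕ × ℕ)) (j : ℕ) (T : TreeLikeTableau) : ℕ → ℕ := fun j' =>
  if j' ≤ j then T.shape.colLen j' else T.shape.colLen j' - 1

variable {j : ℕ}

section gfProps
variable {T : TreeLikeTableau} (hT : T.points = pts) (hjc : j + 1 < nc pts)
  (hA1 : T.shape.colLen j = mu pts j) (hA2 : T.shape.colLen (j + 1) < mu pts j)
include hT hjc hA1 hA2

theorem gf_anti : Antitone (gf pts j T) := by
  intro a b hab
  have hca : ∀ x y, x ≤ y → T.shape.colLen y ≤ T.shape.colLen x := fun x y h =>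
    T.shape.colLen_anti x y h
  by_cases hbj : b ≤ j
  · simp only [gf, if_pos hbj, if_pos (le_trans hab hbj)]
    exact hca _ _ hab
  · by_cases hbc : b < nc pts
    · have hb1 : T.shape.colLen b ≤ T.shape.colLen (j + 1) := hca _ _ (by omega)
      by_cases haj : a ≤ j
      · simp only [gf, if_neg hbj, if_pos hbc, if_pos haj]
        have : T.shape.colLen j ≤ T.shape.colLen a := hca _ _ haj
        omega
      · simp only [gf, if_neg hbj, if_neg haj, if_pos hbc, if_pos (show a < nc pts by omega)]
        have := hca a b hab
        omega
    · simp only [gf, if_neg hbj, if_neg hbc]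
      omega

theorem gf_le_nr : ∀ j', gf pts j T j' ≤ nr pts := by
  intro j'
  simp only [gf]
  split_ifs with h1 h2
  · exact colLen_le_nr hT j'
  · have h3 : T.shape.colLen j' ≤ T.shape.colLen (j + 1) := T.shape.colLen_anti _ _ (by omega)
    have h4 : mu pts j ≤ nr pts := mu_le_nr j
    omega
  · omega

theorem gf_zero : ∀ j', nc pts ≤ j' → gf pts j T j' = 0 := by
  intro j' hj'
  simp only [gf, if_neg (show ¬ j' ≤ j by omega), if_neg (show ¬ j' < nc pts by omega)]

theorem gf_mu : ∀ j', mu pts j' ≤ gf pts j T j' := by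
  intro j'
  simp only [gf]
  split_ifs with h1 h2
  · exact colLen_ge_mu hT j'
  · have := colLen_ge_mu hT j'
    omega
  · rw [mu_eq_zero (show nc pts ≤ j' by omega)]

end gfProps

section gbProps
variable {T : TreeLikeTableau} (hT : T.points = pts) (hjc : j + 1 < nc pts)
  (hB1 : T.shape.colLen j = mu pts j)
  (hB2 : ∀ j', j < j' → j' < nc pts → mu pts j' < T.shape.colLen j')
include hT hjc hB1 hB2

theorem gb_anti : Antitone (gb pts j T) := by
  intro a b hab
  have hca : ∀ x y, x ≤ y → T.shape.colLen y ≤ T.shape.colLen x := fun x y h =>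
    T.shape.colLen_anti x y h
  have := hca a b hab
  by_cases hbj : b ≤ j
  · simp only [gb, if_pos hbj, if_pos (le_trans hab hbj)]; omega
  · by_cases haj : a ≤ j
    · simp only [gb, if_neg hbj, if_pos haj]; omega
    · simp only [gb, if_neg hbj, if_neg haj]; omega

theorem gb_le_nr : ∀ j', gb pts j T j' ≤ nr pts := by
  intro j'
  have := colLen_le_nr hT j'
  simp only [gb]
  split_ifs <;> omega

theorem gb_zero : ∀ j', nc pts ≤ j' → gb pts j T j' = 0 := by
  intro j' hj'
  have := colLen_eq_zero hT hj'
  simp only [gb]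
  split_ifs <;> omega

theorem gb_mu : ∀ j', mu pts j' ≤ gb pts j T j' := by
  intro j'
  simp only [gb]
  split_ifs with h1
  · exact colLen_ge_mu hT j'
  · by_cases h2 : j' < nc pts
    · have := hB2 j' (by omega) h2
      omega
    · rw [mu_eq_zero (show nc pts ≤ j' by omega)]
      omega

end gbProps

/-- Key bijection: tableaux with an occupied corner in column `j` are in bijection
with tableaux whose last contact column with the closure is `j`. -/
theorem key_bij (T₀ : TreeLikeTableau) (h₀ : T₀.points = pts)
    (S : Finset TreeLikeTableau) (hS : ∀ T, T ∈ S ↔ T.points = pts)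
    (hjc : j + 1 < nc pts) (hmm : mu pts (j + 1) < mu pts j)
    (A B : Finset TreeLikeTableau)
    (hA : ∀ T, T ∈ A ↔ T ∈ S ∧ T.shape.colLen j = mu pts j ∧
      T.shape.colLen (j + 1) < mu pts j)
    (hB : ∀ T, T ∈ B ↔ T ∈ S ∧ T.shape.colLen j = mu pts j ∧
      ∀ j', j < j' → j' < nc pts → mu pts j' < T.shape.colLen j') :
    A.card = B.card := by
  classical
  refine Finset.card_bij'
    (fun T hT =>
      mkT T₀ h₀ (gf pts j T)
        (gf_anti ((hS T).1 ((hA T).1 hT).1) hjc ((hA T).1 hT).2.1 ((hA T).1 hT).2.2)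
        (gf_le_nr ((hS T).1 ((hA T).1 hT).1) hjc ((hA T).1 hT).2.1 ((hA T).1 hT).2.2)
        (gf_zero ((hS T).1 ((hA T).1 hT).1) hjc ((hA T).1 hT).2.1 ((hA T).1 hT).2.2)
        (gf_mu ((hS T).1 ((hA T).1 hT).1) hjc ((hA T).1 hT).2.1 ((hA T).1 hT).2.2))
    (fun T hT =>
      mkT T₀ h₀ (gb pts j T)
        (gb_anti ((hS T).1 ((hB T).1 hT).1) hjc ((hB T).1 hT).2.1 ((hB T).1 hT).2.2)
        (gb_le_nr ((hS T).1 ((hB T).1 hT).1) hjc ((hB T).1 hT).2.1 ((hB T).1 hT).2.2)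
        (gb_zero ((hS T).1 ((hB T).1 hT).1) hjc ((hB T).1 hT).2.1 ((hB T).1 hT).2.2)
        (gb_mu ((hS T).1 ((hB T).1 hT).1) hjc ((hB T).1 hT).2.1 ((hB T).1 hT).2.2))
    ?_ ?_ ?_ ?_
  · -- forward image lands in B
    intro T hT
    obtain ⟨hTS, hA1, hA2⟩ := (hA T).1 hT
    have hTp : T.points = pts := (hS T).1 hTS
    rw [hB]
    refine ⟨(hS _).2 (mkT_points _ _ _ _ _ _ _), ?_, ?_⟩
    · rw [mkT_colLen]
      simp only [gf, if_pos (le_refl j)]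
      exact hA1
    · intro j' h1 h2
      rw [mkT_colLen]
      have := colLen_ge_mu hTp j'
      simp only [gf, if_neg (show ¬ j' ≤ j by omega), if_pos h2]
      omega
  · -- backward image lands in A
    intro T hT
    obtain ⟨hTS, hB1, hB2⟩ := (hB T).1 hT
    have hTp : T.points = pts := (hS T).1 hTS
    rw [hA]
    refine ⟨(hS _).2 (mkT_points _ _ _ _ _ _ _), ?_, ?_⟩
    · rw [mkT_colLen]
      simp only [gb, if_pos (le_refl j)]
      exact hB1
    · rw [mkT_colLen]
      simp only [gb, if_neg (show ¬ j + 1 ≤ j by omega)]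
      have h1 : T.shape.colLen (j + 1) ≤ T.shape.colLen j := T.shape.colLen_anti _ _ (by omega)
      omega
  · -- left inverse
    intro T hT
    obtain ⟨hTS, hA1, hA2⟩ := (hA T).1 hT
    have hTp : T.points = pts := (hS T).1 hTS
    apply tlt_ext
    · rw [mkT_points, hTp]
    · intro j'
      rw [mkT_colLen]
      simp only [gb]
      rw [mkT_colLen]
      simp only [gf]
      by_cases h1 : j' ≤ j
      · simp [h1]
      · by_cases h2 : j' < nc pts
        · simp [h1, h2]
        · have := colLen_eq_zero hTp (show nc pts ≤ j' by omega)
          simp [h1, h2]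
          omega
  · -- right inverse
    intro T hT
    obtain ⟨hTS, hB1, hB2⟩ := (hB T).1 hT
    have hTp : T.points = pts := (hS T).1 hTS
    apply tlt_ext
    · rw [mkT_points, hTp]
    · intro j'
      rw [mkT_colLen]
      simp only [gf]
      rw [mkT_colLen]
      simp only [gb]
      by_cases h1 : j' ≤ j
      · simp [h1]
      · by_cases h2 : j' < nc pts
        · have := hB2 j' (by omega) h2
          simp [h1, h2]
          omega
        · have := colLen_eq_zero hTp (show nc pts ≤ j' by omega)
          simp [h1, h2]
          omega

end Bij

end TLTAux


/-- In every non-ambiguous class of tree-like tableaux (the set of tableaux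
whose points are arranged identically, i.e. having a given point set `pts`),
the total number of occupied corners over the class equals the cardinality of
the class. -/
theorem occupied_corners_non_ambiguous_class (pts : Finset (ℕ × ℕ))
    (S : Finset TreeLikeTableau) (hS : ∀ T, T ∈ S ↔ T.points = pts) :
    ∑ T ∈ S, T.oc = S.card := by

  classical
  rcases Finset.eq_empty_or_nonempty S with rfl | ⟨T₀, hT₀⟩
  · simp
  have h₀ : T₀.points = pts := (hS T₀).1 hT₀
  have hroot : (0, 0) ∈ pts := h₀ ▸ T₀.root_mem
  have hnc : 0 < TLTAux.nc pts := TLTAux.lt_nc hroot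
  have h1 : ∀ T ∈ S, T.oc = ∑ jj ∈ Finset.range (TLTAux.nc pts),
      if T.shape.colLen jj = TLTAux.mu pts jj ∧ T.shape.colLen (jj + 1) < TLTAux.mu pts jj
      then 1 else 0 := by
    intro T hT
    rw [TLTAux.oc_eq ((hS T).1 hT), Finset.card_filter]
  rw [Finset.sum_congr rfl h1, Finset.sum_comm]
  rw [Finset.card_eq_sum_card_fiberwise (f := TLTAux.fmax pts)
      (t := Finset.range (TLTAux.nc pts))
      (fun T hT => Finset.mem_range.2 (TLTAux.fmax_spec ((hS T).1 hT) hnc).2.1)]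
  apply Finset.sum_congr rfl
  intro j hjr
  have hj : j < TLTAux.nc pts := Finset.mem_range.1 hjr
  rw [← Finset.card_filter]
  have hfiber : S.filter (fun T => TLTAux.fmax pts T = j) = S.filter (fun T =>
      T.shape.colLen j = TLTAux.mu pts j ∧
        ∀ j', j < j' → j' < TLTAux.nc pts → TLTAux.mu pts j' < T.shape.colLen j') :=
    Finset.filter_congr (fun T hT => TLTAux.fmax_eq_iff ((hS T).1 hT) hnc hj)
  rw [hfiber]
  rcases Nat.lt_or_ge (j + 1) (TLTAux.nc pts) with hjc | hjc
  · rcases Nat.lt_or_ge (TLTAux.mu pts (j + 1)) (TLTAux.mu pts j) with hmm | hmm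
    · -- bijection case
      refine TLTAux.key_bij T₀ h₀ S hS hjc hmm _ _ (fun T => ?_) (fun T => ?_)
      · rw [Finset.mem_filter]
      · rw [Finset.mem_filter]
    · -- both sides empty
      have hEq : TLTAux.mu pts (j + 1) = TLTAux.mu pts j :=
        le_antisymm (TLTAux.mu_anti (by omega)) hmm
      rw [Finset.filter_false_of_mem, Finset.filter_false_of_mem]
      · intro T hT hc
        have h2 := hc.2 (j + 1) (by omega) hjc
        have h3 : T.shape.colLen (j + 1) ≤ T.shape.colLen j := T.shape.colLen_anti _ _ (by omega)
        omega
      · intro T hT hc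
        have h2 := TLTAux.colLen_ge_mu ((hS T).1 hT) (j + 1)
        have := hc.1
        have := hc.2
        omega
  · -- last column case: the two filters coincide
    have hcol : 0 < TLTAux.mu pts j := by
      obtain ⟨rr, hrr⟩ := TLTAux.col_covered h₀ hj
      have := TLTAux.lt_mu hrr (le_refl _)
      omega
    congr 1
    apply Finset.filter_congr
    intro T hT
    have hz : T.shape.colLen (j + 1) = 0 :=
      TLTAux.colLen_eq_zero ((hS T).1 hT) (by omega)
    constructor
    · rintro ⟨ha, _⟩
      exact ⟨ha, fun j' h1' h2' => by omega⟩
    · rintro ⟨ha, _⟩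
      exact ⟨ha, by omega⟩
end

section
/- For a state s of the PASEP of size n with γ = δ = 0, let X(s) be the number of locations where a particle may jump (right or left). If T is any tree-like tableau of size n+1 projecting to s, then X(s) = 2c(T) − 1, where c(T) is the number of corners of T. -/
open Polynomial

/-- The Southeast border word of a Young diagram, read from the Southwest end
to the Northeast end, with `false` an East step and `true` a North step. -/
def borderWord (D : YoungDiagram) : List Bool :=
  (List.range (D.colLen 0)).reverse.flatMap (fun i =>
    List.replicate (D.rowLen i - D.rowLen (i + 1)) false ++ [true])

/-- The number of corners of a Young diagram: cells whose bottom and right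
edges lie on the Southeast border. -/
def cornersCount (D : YoungDiagram) : ℕ :=
  (D.cells.filter (fun p => (p.1 + 1, p.2) ∉ D.cells ∧ (p.1, p.2 + 1) ∉ D.cells)).card

/-- For a PASEP state `s ∈ {○,●}ⁿ` (with `true` a particle `●` and `false` an
empty site `○`), and boundary rates `γ = δ = 0`, the number of locations where
a particle may jump to the right or to the left: occurrences of `●○` (right
jump), of `○●` (left jump), an `○` at the left end (a particle may enter) and
a `●` at the right end (a particle may exit). -/
def jumpLocations (s : List Bool) : ℕ :=
  ((List.range (s.length - 1)).filter
      (fun i => s.getD i false && !(s.getD (i + 1) true))).length +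
  ((List.range (s.length - 1)).filter
      (fun i => !(s.getD i true) && s.getD (i + 1) false)).length +
  (if s.getD 0 true = false then 1 else 0) +
  (if s.getD (s.length - 1) false = true then 1 else 0)


namespace JumpAux

def cnt2 (f : Bool → Bool → Bool) : List Bool → ℕ
  | [] => 0
  | [_] => 0
  | a :: b :: t => (if f a b then 1 else 0) + cnt2 f (b :: t)

def bdry (f : Bool → Bool → Bool) (u v : List Bool) : ℕ :=
  match u.getLast?, v.head? with
  | some a, some b => if f a b then 1 else 0
  | _, _ => 0

@[simp] lemma cnt2_nil (f) : cnt2 f [] = 0 := rfl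
@[simp] lemma cnt2_single (f x) : cnt2 f [x] = 0 := rfl
@[simp] lemma cnt2_cons_cons (f a b t) :
    cnt2 f (a :: b :: t) = (if f a b then 1 else 0) + cnt2 f (b :: t) := rfl

lemma cnt2_cons (f : Bool → Bool → Bool) (x : Bool) (l : List Bool) :
    cnt2 f (x :: l) = bdry f [x] l + cnt2 f l := by
  cases l <;> simp [cnt2, bdry]

lemma bdry_single_append (f : Bool → Bool → Bool) (x : Bool) (u v : List Bool) :
    bdry f [x] (u ++ v) + bdry f u v = bdry f [x] u + bdry f (x :: u) v := by
  cases u with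
  | nil => simp [bdry]
  | cons c u' => simp [bdry]

lemma cnt2_append (f : Bool → Bool → Bool) (u v : List Bool) :
    cnt2 f (u ++ v) = cnt2 f u + bdry f u v + cnt2 f v := by
  induction u with
  | nil => simp [bdry]
  | cons x u ih =>
      rw [List.cons_append, cnt2_cons, ih, cnt2_cons f x u]
      have := bdry_single_append f x u v
      omega

end JumpAux

namespace JumpAux

lemma filter_range_len (f : Bool → Bool → Bool) (d1 d2 : Bool) (s : List Bool) :
    ((List.range (s.length - 1)).filter
        (fun i => f (s.getD i d1) (s.getD (i + 1) d2))).length = cnt2 f s := by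
  induction s with
  | nil => simp
  | cons x t ih =>
      cases t with
      | nil => simp
      | cons y r =>
          rw [cnt2_cons_cons]
          have hlen : (x :: y :: r).length - 1 = (y :: r).length := by simp
          rw [hlen, show (y :: r).length = (y :: r).length - 1 + 1 by simp,
            List.range_succ_eq_map]
          rw [List.filter_cons]
          simp only [List.getD_cons_zero, List.getD_cons_succ, List.filter_map,
            List.length_map]
          rw [← ih]
          cases f x y <;> simp [Function.comp_def] <;> omega

lemma balance (x : Bool) (t : List Bool) :
    cnt2 (fun a b => !a && b) (x :: t) + (if x then 1 else 0)
      = cnt2 (fun a b => a && !b) (x :: t)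
        + (if (x :: t).getLastD false then 1 else 0) := by
  induction t generalizing x with
  | nil => cases x <;> simp [cnt2]
  | cons y r ih =>
      have h1 := ih y
      have h2 : (x :: y :: r).getLastD false = (y :: r).getLastD false := by
        simp [List.getLastD_cons]
      rw [cnt2_cons_cons, cnt2_cons_cons, h2]
      cases x <;> cases y <;> simp_all <;> omega

end JumpAux

namespace JumpAux

lemma cnt2_replicate (f : Bool → Bool → Bool) (c : Bool) (hf : f c c = false) (n : ℕ) :
    cnt2 f (List.replicate n c) = 0 := by
  induction n with
  | zero => simp
  | succ m ih =>
      cases m with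
      | zero => simp
      | succ m' =>
          rw [List.replicate_succ, List.replicate_succ, cnt2_cons_cons, hf,
            ← List.replicate_succ]
          simpa using ih

lemma cnt2_map_not (f : Bool → Bool → Bool) (l : List Bool) :
    cnt2 f (l.map (fun b => !b)) = cnt2 (fun a b => f (!a) (!b)) l := by
  induction l with
  | nil => simp
  | cons x t ih =>
      cases t with
      | nil => simp
      | cons y r =>
          simp only [List.map_cons, cnt2_cons_cons] at *
          rw [ih]

/-- cnt2 of a `false,true`-counting function on a block `replicate d false ++ [true]`. -/
lemma cnt2_block (d : ℕ) :
    cnt2 (fun a b => !a && b) (List.replicate d false ++ [true])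
      = if 0 < d then 1 else 0 := by
  rw [cnt2_append, cnt2_replicate _ _ (by simp), cnt2_single]
  cases d with
  | zero => simp [bdry]
  | succ m =>
      simp [bdry, List.getLast?_replicate]

lemma getLast?_block (d : ℕ) (b : Bool) (l : List Bool) :
    (l ++ [b]).getLast? = some b := by simp

lemma cnt2_flatMap (g : ℕ → List Bool)
    (hg : ∀ i, ∃ u, g i = u ++ [true]) (I : List ℕ) :
    cnt2 (fun a b => !a && b) (I.flatMap g)
      = (I.map (fun i => cnt2 (fun a b => !a && b) (g i))).sum := by
  induction I with
  | nil => simp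
  | cons i I ih =>
      rw [List.flatMap_cons, cnt2_append, ih]
      obtain ⟨u, hu⟩ := hg i
      have : bdry (fun a b => !a && b) (g i) (I.flatMap g) = 0 := by
        rw [hu]
        unfold bdry
        cases (I.flatMap g).head? <;> simp
      rw [this]
      simp [List.map_cons]

end JumpAux

namespace JumpAux

lemma corner_snd (D : YoungDiagram) (p : ℕ × ℕ)
    (hp : p ∈ D.cells.filter (fun p => (p.1 + 1, p.2) ∉ D.cells ∧ (p.1, p.2 + 1) ∉ D.cells)) :
    p.2 = D.rowLen p.1 - 1 ∧ D.rowLen (p.1 + 1) < D.rowLen p.1 ∧ p.1 < D.colLen 0 := by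
  obtain ⟨i, j⟩ := p
  simp only [Finset.mem_filter, YoungDiagram.mem_cells] at hp
  obtain ⟨h1, h2, h3⟩ := hp
  rw [YoungDiagram.mem_iff_lt_rowLen] at h1 h2 h3
  simp only [Prod.fst, Prod.snd] at h1 h2 h3 ⊢
  have hcol : i < D.colLen 0 := by
    rw [← YoungDiagram.mem_iff_lt_colLen]
    exact D.up_left_mem le_rfl (Nat.zero_le j) (by rw [YoungDiagram.mem_iff_lt_rowLen]; exact h1)
  refine ⟨by omega, by omega, hcol⟩

lemma cornersCount_eq (D : YoungDiagram) :
    cornersCount D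
      = ((Finset.range (D.colLen 0)).filter
          (fun i => D.rowLen (i + 1) < D.rowLen i)).card := by
  unfold cornersCount
  apply Finset.card_bij (fun p _ => p.1)
  · intro p hp
    obtain ⟨h1, h2, h3⟩ := corner_snd D p hp
    simp only [Finset.mem_filter, Finset.mem_range]
    exact ⟨h3, h2⟩
  · intro p1 h1 p2 h2 heq
    obtain ⟨a1, -, -⟩ := corner_snd D p1 h1
    obtain ⟨a2, -, -⟩ := corner_snd D p2 h2
    obtain ⟨i1, j1⟩ := p1; obtain ⟨i2, j2⟩ := p2
    simp only at heq a1 a2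
    subst heq
    simp [a1, a2]
  · intro i hi
    simp only [Finset.mem_filter, Finset.mem_range] at hi
    obtain ⟨hik, hlt⟩ := hi
    have hpos : 0 < D.rowLen i := by
      rw [← YoungDiagram.mem_iff_lt_rowLen, ← YoungDiagram.mem_iff_lt_colLen] at *
      exact hik
    refine ⟨(i, D.rowLen i - 1), ?_, rfl⟩
    simp only [Finset.mem_filter, YoungDiagram.mem_cells]
    rw [YoungDiagram.mem_iff_lt_rowLen, YoungDiagram.mem_iff_lt_rowLen,
      YoungDiagram.mem_iff_lt_rowLen]
    refine ⟨by omega, by omega, by omega⟩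

end JumpAux

namespace JumpAux

lemma list_sum_indicator (P : ℕ → Prop) [DecidablePred P] (k : ℕ) :
    ((List.range k).map (fun i => if P i then 1 else 0)).sum
      = ((Finset.range k).filter P).card := by
  induction k with
  | zero => simp
  | succ m ih =>
      rw [List.range_succ, Finset.range_add_one, List.map_append, List.sum_append,
        Finset.filter_insert]
      by_cases h : P m
      · rw [if_pos h, Finset.card_insert_of_notMem (by simp)]
        simp [h, ih]
      · simp [h, ih]

/-- The count of `EN` factors of the border word equals the corners count. -/
lemma cnt2_borderWord (D : YoungDiagram) :
    cnt2 (fun a b => !a && b) (borderWord D) = cornersCount D := by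
  rw [borderWord, cnt2_flatMap _ (fun i => ⟨_, rfl⟩)]
  have : ∀ i : ℕ,
      cnt2 (fun a b => !a && b)
        (List.replicate (D.rowLen i - D.rowLen (i + 1)) false ++ [true])
      = if D.rowLen (i + 1) < D.rowLen i then 1 else 0 := by
    intro i
    rw [cnt2_block]
    congr 1
    simp only [eq_iff_iff]
    omega
  simp only [this]
  rw [List.map_reverse, List.sum_reverse, list_sum_indicator, cornersCount_eq]

end JumpAux

namespace JumpAux

lemma length_flatMap_ge (g : ℕ → List Bool) (hg : ∀ i, g i ≠ []) (I : List ℕ) :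
    I.length ≤ (I.flatMap g).length := by
  induction I with
  | nil => simp
  | cons i I ih =>
      rw [List.flatMap_cons, List.length_append]
      have := List.length_pos_iff.mpr (hg i)
      simp only [List.length_cons]
      omega

lemma borderWord_decomp (D : YoungDiagram) (hk : 0 < D.colLen 0)
    (hc : 2 ≤ D.cells.card) :
    ∃ m : List Bool, borderWord D = false :: (m ++ [true]) ∧ m ≠ [] := by
  set g : ℕ → List Bool :=
    fun i => List.replicate (D.rowLen i - D.rowLen (i + 1)) false ++ [true] with hg
  obtain ⟨k', hk'⟩ : ∃ k', D.colLen 0 = k' + 1 := ⟨D.colLen 0 - 1, by omega⟩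
  -- head decomposition
  have hrowk : D.rowLen (k' + 1) = 0 := by
    by_contra h
    have : (k' + 1, 0) ∈ D := by
      rw [YoungDiagram.mem_iff_lt_rowLen]; omega
    rw [YoungDiagram.mem_iff_lt_colLen] at this
    have := D.colLen_anti 0 0 le_rfl
    omega
  have hrow' : 0 < D.rowLen k' := by
    rw [← YoungDiagram.mem_iff_lt_rowLen, YoungDiagram.mem_iff_lt_colLen]
    omega
  have hB : borderWord D = false ::
      ((List.replicate (D.rowLen k' - 1) false ++ [true])
        ++ (List.range k').reverse.flatMap g) := by
    rw [borderWord, hk', List.range_succ, List.reverse_append, ← hg]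
    simp only [List.reverse_singleton, List.singleton_append, List.flatMap_cons]
    rw [hg]
    simp only []
    rw [hrowk, Nat.sub_zero]
    obtain ⟨d', hd'⟩ : ∃ d', D.rowLen k' = d' + 1 := ⟨D.rowLen k' - 1, by omega⟩
    rw [hd', List.replicate_succ]
    simp
  -- last decomposition
  have hA : ∃ v, borderWord D = v ++ [true] := by
    rw [borderWord, hk', List.range_succ_eq_map, ← hg]
    simp only [List.reverse_cons, List.flatMap_append, List.flatMap_singleton]
    rw [hg]
    simp only []
    exact ⟨_, by rw [List.append_assoc]⟩
  obtain ⟨v, hv⟩ := hA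
  -- length bound
  have hlen : 3 ≤ (borderWord D).length := by
    rcases Nat.eq_zero_or_pos k' with h0 | hpos
    · subst h0
      have hr2 : 2 ≤ D.rowLen 0 := by
        by_contra h
        push_neg at h
        have hsub : D.cells ⊆ {(0, 0)} := by
          intro p hp
          obtain ⟨i, j⟩ := p
          rw [YoungDiagram.mem_cells, YoungDiagram.mem_iff_lt_rowLen] at hp
          change j < D.rowLen i at hp
          have hi : i < D.colLen 0 := by
            rw [← YoungDiagram.mem_iff_lt_colLen]
            exact D.up_left_mem le_rfl (Nat.zero_le j)
              (by rw [YoungDiagram.mem_iff_lt_rowLen]; exact hp)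
          have hi0 : i = 0 := by omega
          subst hi0
          have hj : j = 0 := by omega
          simp [hj]
        have := Finset.card_le_card hsub
        rw [Finset.card_singleton] at this
        omega
      rw [hB]
      simp only [List.length_cons, List.length_append, List.length_replicate]
      omega
    · rw [hB]
      have h1 := length_flatMap_ge g (fun i => by rw [hg]; simp) (List.range k').reverse
      simp only [List.length_reverse, List.length_range] at h1
      simp only [List.length_cons, List.length_append, List.length_replicate,
        List.length_singleton]
      omega
  -- combine
  rw [hB] at hv ⊢
  match v, hv with
  | [], hv => simp at hv
  | b :: v', hv =>
      have hb : b = false := by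
        have := congrArg (fun l => l.head?) hv
        simpa using this.symm
      subst hb
      have hv' : (List.replicate (D.rowLen k' - 1) false ++ [true])
          ++ (List.range k').reverse.flatMap g = v' ++ [true] := by
        simpa using hv
      refine ⟨v', by rw [hv'], ?_⟩
      intro h
      subst h
      have h2 := congrArg List.length hv'
      rw [hB] at hlen
      simp only [List.length_cons, List.length_append, List.length_replicate,
        List.length_singleton, List.length_nil, List.nil_append] at hlen h2
      omega

end JumpAux

namespace JumpAux

lemma main (D : YoungDiagram) (hk : 0 < D.colLen 0) (hc : 2 ≤ D.cells.card) :
    jumpLocations (((borderWord D).drop 1).dropLast.map (fun b => !b))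
      = 2 * cornersCount D - 1 := by
  obtain ⟨m, hw, hm⟩ := borderWord_decomp D hk hc
  obtain ⟨a, m₂, ha⟩ : ∃ a m₂, m = a :: m₂ := by
    cases m with
    | nil => exact absurd rfl hm
    | cons a t => exact ⟨a, t, rfl⟩
  obtain ⟨m₁, b, hb⟩ : ∃ m₁ b, m = m₁ ++ [b] := by
    rcases List.eq_nil_or_concat m with h | ⟨m₁, b, h⟩
    · exact absurd h hm
    · exact ⟨m₁, b, by simpa using h⟩
  have hdrop : ((borderWord D).drop 1).dropLast = m := by
    rw [hw]
    simp only [List.drop_succ_cons, List.drop_zero, List.dropLast_concat]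
  rw [hdrop]
  set FT := fun a b : Bool => !a && b with hFT
  set TF := fun a b : Bool => a && !b with hTF
  set s := m.map (fun b => !b) with hs
  -- the two pattern counts
  have hA : ((List.range (s.length - 1)).filter
      (fun i => s.getD i false && !(s.getD (i + 1) true))).length = cnt2 TF s :=
    filter_range_len TF false true s
  have hB : ((List.range (s.length - 1)).filter
      (fun i => !(s.getD i true) && s.getD (i + 1) false)).length = cnt2 FT s :=
    filter_range_len FT true false s
  have hTFs : cnt2 TF s = cnt2 FT m := by
    rw [hs, cnt2_map_not]
    congr 1
    funext x y
    rw [hTF, hFT]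
    cases x <;> cases y <;> rfl
  have hFTs : cnt2 FT s = cnt2 TF m := by
    rw [hs, cnt2_map_not]
    congr 1
    funext x y
    rw [hTF, hFT]
    cases x <;> cases y <;> rfl
  -- end terms
  have hC : (if s.getD 0 true = false then 1 else 0) = (if a then 1 else 0) := by
    rw [hs, ha]
    cases a <;> simp
  have hslen : s.length - 1 = m₁.length := by
    rw [hs, hb]; simp
  have hD : (if s.getD (s.length - 1) false = true then 1 else 0)
      = (if b then 0 else 1) := by
    rw [hslen, hs, hb, List.map_append]
    simp only [List.map_cons, List.map_nil]
    have : ((m₁.map (fun b => !b)) ++ [!b]).getD m₁.length false = !b := by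
      rw [List.getD_eq_getElem?_getD,
        show m₁.length = (m₁.map (fun b => !b)).length from (List.length_map _).symm,
        List.getElem?_concat_length]
      rfl
    simp only [this]
    cases b <;> simp
  -- counts on the full border word
  have hENw : cnt2 FT (borderWord D) = cornersCount D := cnt2_borderWord D
  have hwE : cnt2 FT (borderWord D)
      = (if a then 1 else 0) + cnt2 FT m + (if b then 0 else 1) := by
    rw [hw, cnt2_cons, cnt2_append, cnt2_single]
    have h1 : bdry FT [false] (m ++ [true]) = (if a then 1 else 0) := by
      rw [ha]
      unfold bdry
      cases a <;> simp [hFT]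
    have h2 : bdry FT m [true] = (if b then 0 else 1) := by
      rw [hb]
      unfold bdry
      rw [List.getLast?_concat]
      cases b <;> simp [hFT]
    rw [h1, h2]
    ring
  have hwN : cnt2 TF (borderWord D) = cnt2 TF m := by
    rw [hw, cnt2_cons, cnt2_append, cnt2_single]
    have h1 : bdry TF [false] (m ++ [true]) = 0 := by
      rw [ha]
      unfold bdry
      simp [hTF]
    have h2 : bdry TF m [true] = 0 := by
      rw [hb]
      unfold bdry
      rw [List.getLast?_concat]
      simp [hTF]
    rw [h1, h2]
    omega
  -- balance
  have hbal : cnt2 FT (borderWord D) = cnt2 TF (borderWord D) + 1 := by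
    have h := balance false (m ++ [true])
    have hlast : ((false :: (m ++ [true])).getLastD false) = true := by
      rw [← List.cons_append, List.getLastD_concat]
    rw [hlast] at h
    rw [hw]
    simpa [hFT, hTF] using h
  -- put it together
  unfold jumpLocations
  rw [hA, hB, hC, hD, hTFs, hFTs]
  have e1 : (if a then 1 else 0) + cnt2 FT m + (if b then 0 else 1)
      = cornersCount D := by rw [← hwE, hENw]
  have e2 : cnt2 TF m + 1 = cornersCount D := by
    rw [← hwN, ← hENw, hbal]
  cases a <;> cases b <;> simp only [if_true, if_false, ↓reduceIte, Bool.false_eq_true, add_zero, zero_add] at e1 ⊢ <;> omega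

end JumpAux

/-- If a tree-like tableau `T` of size `n+1` projects to the PASEP state `s`
(the Southeast border word of `T` without its first and last steps, an East
step giving a particle `●` and a North step an empty site `○`), then the
number of locations of `s` where a particle may jump to the right or to the
left is `2c(T) - 1`, where `c(T)` is the number of corners of `T`. -/
theorem jump_locations_eq_two_corners_sub_one (n : ℕ) (hn : 1 ≤ n)
    (T : TreeLikeTableau) (hT : T.size = n + 1) (s : List Bool)
    (hs : s = (((borderWord T.shape).drop 1).dropLast).map (fun b => !b)) :
    jumpLocations s = 2 * cornersCount T.shape - 1 := by
  have hk : 0 < T.shape.colLen 0 := by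
    rw [← YoungDiagram.mem_iff_lt_colLen]
    exact T.points_subset T.root_mem
  have hc : 2 ≤ T.shape.cells.card := by
    have h1 := Finset.card_le_card T.points_subset
    have h2 : T.points.card = n + 1 := hT
    omega
  rw [hs]
  exact JumpAux.main T.shape hk hc
end
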